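/- Let t₁, t₂, t₃ > 0 and let (x₁,x₂,x₃,h) ∈ ℝ⁴ with h ≠ 0 and x₁ < x₃ < x₂ satisfy the Young–Dupré equations t₁(h²−x₁²)/(h²+x₁²) + t₂(h²−x₂²)/(h²+x₂²) + t₃(h²−x₃²)/(h²+x₃²) = 0 and t₁x₁/(h²+x₁²) + t₂x₂/(h²+x₂²) + t₃x₃/(h²+x₃²) = 0. Then the surface tensions satisfy the strict triangle inequalities: t₁ < t₂ + t₃, t₂ < t₃ + t₁, and t₃ < t₁ + t₂ (equivalently, 2·max(t₁,t₂,t₃) < t₁ + t₂ + t₃). -/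

import Mathlib

/-- Stereographic images of distinct points have dot product < 1. -/
lemma dot_lt_one' (h x y : ℝ) (hh : h ≠ 0) (hxy : x ≠ y) :
    ((h ^ 2 - x ^ 2) / (h ^ 2 + x ^ 2)) * ((h ^ 2 - y ^ 2) / (h ^ 2 + y ^ 2)) +
      (2 * h * x / (h ^ 2 + x ^ 2)) * (2 * h * y / (h ^ 2 + y ^ 2)) < 1 := by
  have dx : 0 < h ^ 2 + x ^ 2 := by positivity
  have dy : 0 < h ^ 2 + y ^ 2 := by positivity
  rw [div_mul_div_comm, div_mul_div_comm, ← add_div, div_lt_one (by positivity)]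
  have hne : x - y ≠ 0 := sub_ne_zero.mpr hxy
  have hp : 0 < h ^ 2 * (x - y) ^ 2 := by positivity
  nlinarith [hp]

/-- One triangle inequality from a vanishing sum of scaled unit vectors. -/
lemma tri_aux (ta tb tc ca cb cc sa sb sc : ℝ)
    (hta : 0 < ta) (htb : 0 < tb) (htc : 0 < tc)
    (ua : ca ^ 2 + sa ^ 2 = 1) (ub : cb ^ 2 + sb ^ 2 = 1) (uc : cc ^ 2 + sc ^ 2 = 1)
    (hd : cb * cc + sb * sc < 1)
    (hc : ta * ca + tb * cb + tc * cc = 0)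
    (hs : ta * sa + tb * sb + tc * sc = 0) : ta < tb + tc := by
  have e1 : ta * ca = -(tb * cb + tc * cc) := by linarith
  have e2 : ta * sa = -(tb * sb + tc * sc) := by linarith
  have hid : ta ^ 2 = tb ^ 2 + tc ^ 2 + 2 * tb * tc * (cb * cc + sb * sc) := by
    calc ta ^ 2 = ta ^ 2 * (ca ^ 2 + sa ^ 2) := by rw [ua, mul_one]
    _ = (ta * ca) ^ 2 + (ta * sa) ^ 2 := by ring
    _ = (tb * cb + tc * cc) ^ 2 + (tb * sb + tc * sc) ^ 2 := by rw [e1, e2]; ring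
    _ = tb ^ 2 * (cb ^ 2 + sb ^ 2) + tc ^ 2 * (cc ^ 2 + sc ^ 2)
        + 2 * tb * tc * (cb * cc + sb * sc) := by ring
    _ = _ := by rw [ub, uc]; ring
  have key : ta ^ 2 < (tb + tc) ^ 2 := by nlinarith [mul_pos htb htc]
  nlinarith

/-- At a point with `h ≠ 0` and `x₁ < x₃ < x₂` satisfying the Young–Dupré equations,
the surface tensions satisfy the strict triangle inequalities. -/
theorem stmt_8 (t₁ t₂ t₃ : ℝ) (ht₁ : 0 < t₁) (ht₂ : 0 < t₂) (ht₃ : 0 < t₃)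
    (x₁ x₂ x₃ h : ℝ) (hh : h ≠ 0) (h₁₃ : x₁ < x₃) (h₃₂ : x₃ < x₂)
    (hcos : t₁ * (h ^ 2 - x₁ ^ 2) / (h ^ 2 + x₁ ^ 2) + t₂ * (h ^ 2 - x₂ ^ 2) / (h ^ 2 + x₂ ^ 2) +
      t₃ * (h ^ 2 - x₃ ^ 2) / (h ^ 2 + x₃ ^ 2) = 0)
    (hsin : t₁ * x₁ / (h ^ 2 + x₁ ^ 2) + t₂ * x₂ / (h ^ 2 + x₂ ^ 2) +
      t₃ * x₃ / (h ^ 2 + x₃ ^ 2) = 0) :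
    t₁ < t₂ + t₃ ∧ t₂ < t₃ + t₁ ∧ t₃ < t₁ + t₂ := by
  set c₁ := (h ^ 2 - x₁ ^ 2) / (h ^ 2 + x₁ ^ 2) with hc₁
  set c₂ := (h ^ 2 - x₂ ^ 2) / (h ^ 2 + x₂ ^ 2) with hc₂
  set c₃ := (h ^ 2 - x₃ ^ 2) / (h ^ 2 + x₃ ^ 2) with hc₃
  set s₁ := 2 * h * x₁ / (h ^ 2 + x₁ ^ 2) with hs₁
  set s₂ := 2 * h * x₂ / (h ^ 2 + x₂ ^ 2) with hs₂
  set s₃ := 2 * h * x₃ / (h ^ 2 + x₃ ^ 2) with hs₃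
  have d₁ : (h ^ 2 + x₁ ^ 2) ≠ 0 := by positivity
  have d₂ : (h ^ 2 + x₂ ^ 2) ≠ 0 := by positivity
  have d₃ : (h ^ 2 + x₃ ^ 2) ≠ 0 := by positivity
  have u₁ : c₁ ^ 2 + s₁ ^ 2 = 1 := by rw [hc₁, hs₁]; field_simp; ring
  have u₂ : c₂ ^ 2 + s₂ ^ 2 = 1 := by rw [hc₂, hs₂]; field_simp; ring
  have u₃ : c₃ ^ 2 + s₃ ^ 2 = 1 := by rw [hc₃, hs₃]; field_simp; ring
  have hc : t₁ * c₁ + t₂ * c₂ + t₃ * c₃ = 0 := by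
    have e : t₁ * c₁ + t₂ * c₂ + t₃ * c₃ =
        t₁ * (h ^ 2 - x₁ ^ 2) / (h ^ 2 + x₁ ^ 2) + t₂ * (h ^ 2 - x₂ ^ 2) / (h ^ 2 + x₂ ^ 2) +
          t₃ * (h ^ 2 - x₃ ^ 2) / (h ^ 2 + x₃ ^ 2) := by rw [hc₁, hc₂, hc₃]; ring
    rw [e]; exact hcos
  have hs : t₁ * s₁ + t₂ * s₂ + t₃ * s₃ = 0 := by
    have : t₁ * s₁ + t₂ * s₂ + t₃ * s₃ =
        2 * h * (t₁ * x₁ / (h ^ 2 + x₁ ^ 2) + t₂ * x₂ / (h ^ 2 + x₂ ^ 2) +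
          t₃ * x₃ / (h ^ 2 + x₃ ^ 2)) := by rw [hs₁, hs₂, hs₃]; ring
    rw [this, hsin, mul_zero]
  have h₁₂ : x₁ < x₂ := h₁₃.trans h₃₂
  have hd12 : c₁ * c₂ + s₁ * s₂ < 1 := dot_lt_one' h x₁ x₂ hh h₁₂.ne
  have hd13 : c₁ * c₃ + s₁ * s₃ < 1 := dot_lt_one' h x₁ x₃ hh h₁₃.ne
  have hd23 : c₂ * c₃ + s₂ * s₃ < 1 := dot_lt_one' h x₂ x₃ hh h₃₂.ne'
  refine ⟨tri_aux t₁ t₂ t₃ c₁ c₂ c₃ s₁ s₂ s₃ ht₁ ht₂ ht₃ u₁ u₂ u₃ hd23 hc hs, ?_, ?_⟩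
  · exact tri_aux t₂ t₃ t₁ c₂ c₃ c₁ s₂ s₃ s₁ ht₂ ht₃ ht₁ u₂ u₃ u₁
      (by linarith [hd13]) (by linarith) (by linarith)
  · exact tri_aux t₃ t₁ t₂ c₃ c₁ c₂ s₃ s₁ s₂ ht₃ ht₁ ht₂ u₃ u₁ u₂
      (by linarith [hd12]) (by linarith) (by linarith)
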